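/- Let d ∈ {2,3}. Let (h_n) ⊂ (0,1) with h_n → 0⁺ and h_n^{−2} ∉ {λ_ℓ² : ℓ ∈ ℕ} for all n (so σ_n := σ(h_n) ∈ (0,1)); write ℓ_n := ℓ(h_n). Assume (β_n) = ((β_{n,+}, β_{n,−})) ⊂ ℂ² converges to β = (β₊, β₋), that ρ := (−1)^{ℓ_n} is constant in n, that σ_n → σ ∈ {0,1}, that β₊ + (−1)^σ ρ β₋ = 0, and that c := lim_n (β_{n,+} + (−1)^σ ρ β_{n,−})/(σ − σ_n) exists in ℂ. Set C₀² := |c|² + Σ_{k∈ℤ, k≠σ} |β₊ + (−1)^k ρ β₋|²/(k−σ)². Then there exists C > 1 such that for every integer Υ ≥ 1 there exists ν ∈ ℕ such that for all n ≥ ν: |Σ over integers k with |k−σ| ≤ 2Υ−1 of |β_{n,+} + (−1)^{ℓ_n+k} β_{n,−}|² · m_{ℓ_n+k}/(λ_{ℓ_n+k}² − h_n^{−2})² − C₀² h_n^{3−d}/(2(d−1))| ≤ C h_n^{3−d}(Υ h_n + |σ_n − σ| + |β_n − β| + |c − (β_{n,+} + (−1)^σ ρ β_{n,−})/(σ − σ_n)|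 + Υ^{−1}). -/

import Mathlib

open Filter

/-- The squared Laplace eigenvalue `λ_ℓ² = ℓ(ℓ+d−1)` on `S^d`, extended to integer index. -/
noncomputable def lam2 (d : ℕ) (l : ℤ) : ℝ := (l : ℝ) * ((l : ℝ) + (d : ℝ) - 1)

/-- The multiplicity `m_ℓ` (`2ℓ+1` if `d = 2`, `(ℓ+1)²` if `d = 3`), extended to integer
index. -/
noncomputable def mult (d : ℕ) (l : ℤ) : ℝ :=
  if d = 2 then 2 * (l : ℝ) + 1 else ((l : ℝ) + 1) ^ 2

lemma hL_atTop (d : ℕ) (hd1 : 1 ≤ (d:ℝ)) (h : ℕ → ℝ) (hh : ∀ n, h n ∈ Set.Ioo (0:ℝ) 1)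
    (hto : Tendsto h atTop (nhds 0)) (L : ℕ → ℕ) (s : ℕ → ℝ)
    (hs : ∀ n, s n ∈ Set.Ico (0:ℝ) 1)
    (heq : ∀ n, (h n) ^ (-2 : ℤ) = ((L n : ℝ) + s n) * ((L n : ℝ) + s n + (d : ℝ) - 1)) :
    Tendsto (fun n => (L n : ℝ)) atTop atTop := by
  have hinv : Tendsto (fun n => (h n)⁻¹) atTop atTop := by
    apply Filter.Tendsto.comp tendsto_inv_nhdsGT_zero
    apply tendsto_nhdsWithin_of_tendsto_nhds_of_eventually_within _ hto
    exact Eventually.of_forall (fun n => (hh n).1)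
  have hbound : ∀ n, (h n)⁻¹ - d ≤ (L n : ℝ) := by
    intro n
    have hpos := (hh n).1
    have hs0 := (hs n).1
    have hs1 := (hs n).2
    have hL0 : (0:ℝ) ≤ (L n : ℝ) := Nat.cast_nonneg _
    have e1 : ((h n)⁻¹)^2 = ((L n : ℝ) + s n) * ((L n : ℝ) + s n + (d : ℝ) - 1) := by
      rw [inv_pow, ← heq n, zpow_neg, ← zpow_natCast (h n) 2]
      norm_num
    by_contra hcon
    push_neg at hcon
    have h2 : ((h n)⁻¹)^2 ≤ ((L n : ℝ) + d)^2 := by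
      rw [e1, sq]
      apply mul_le_mul (by linarith) (by linarith) (by linarith) (by linarith)
    have h3 : ((L n : ℝ) + d)^2 < ((h n)⁻¹)^2 := by
      have hB : (0:ℝ) ≤ (L n : ℝ) + d := by linarith
      have : (L n : ℝ) + d < (h n)⁻¹ := by linarith
      nlinarith
    linarith
  apply tendsto_atTop_mono hbound
  exact tendsto_atTop_add_const_right _ _ hinv

lemma Wlim (d : ℕ) (hd : d = 2 ∨ d = 3) (h : ℕ → ℝ) (hh : ∀ n, h n ∈ Set.Ioo (0:ℝ) 1)
    (hto : Tendsto h atTop (nhds 0)) (L : ℕ → ℕ) (s : ℕ → ℝ)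
    (hs : ∀ n, s n ∈ Set.Ico (0:ℝ) 1)
    (heq : ∀ n, (h n) ^ (-2 : ℤ) = ((L n : ℝ) + s n) * ((L n : ℝ) + s n + (d : ℝ) - 1))
    (σr : ℝ) (hsto : Tendsto s atTop (nhds σr)) (k : ℤ) :
    Tendsto (fun n => mult d ((L n : ℤ) + k) * (h n) ^ ((d:ℤ) - 3)
        / (2*(L n : ℝ) + (k:ℝ) + s n + (d:ℝ) - 1)^2) atTop
      (nhds ((2*((d:ℝ)-1))⁻¹)) := by
  have hd1 : 1 ≤ (d:ℝ) := by rcases hd with rfl | rfl <;> norm_num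
  have hL := hL_atTop d hd1 h hh hto L s hs heq
  have ht : Tendsto (fun n => (L n : ℝ)⁻¹) atTop (nhds 0) := hL.inv_tendsto_atTop
  have hev : ∀ᶠ n in atTop, |(k:ℝ)| + 1 ≤ (L n : ℝ) := hL.eventually_ge_atTop _
  rcases hd with rfl | rfl
  · -- d = 2
    have key : Tendsto (fun n =>
        (2 + (2*(k:ℝ)+1) * (L n : ℝ)⁻¹)
          * Real.sqrt ((1 + s n * (L n : ℝ)⁻¹) * (1 + (s n + 1) * (L n : ℝ)⁻¹))
          / (2 + ((k:ℝ) + s n + 1) * (L n : ℝ)⁻¹)^2) atTop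
        (nhds ((2 + (2*(k:ℝ)+1) * 0) * Real.sqrt ((1 + σr * 0) * (1 + (σr + 1) * 0))
          / (2 + ((k:ℝ) + σr + 1) * 0)^2)) := by
      apply Tendsto.div
      · exact (tendsto_const_nhds.add (tendsto_const_nhds.mul ht)).mul
          (((tendsto_const_nhds.add (hsto.mul ht)).mul
            (tendsto_const_nhds.add ((hsto.add tendsto_const_nhds).mul ht))).sqrt)
      · exact (tendsto_const_nhds.add (((tendsto_const_nhds.add hsto).add
          tendsto_const_nhds).mul ht)).pow 2
      · norm_num
    have keyval : (2 + (2*(k:ℝ)+1) * 0) * Real.sqrt ((1 + σr * 0) * (1 + (σr + 1) * 0))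
        / (2 + ((k:ℝ) + σr + 1) * 0)^2 = (2*(((2:ℕ):ℝ)-1))⁻¹ := by
      norm_num
    rw [keyval] at key
    refine key.congr' ?_
    filter_upwards [hev] with n hn
    have hx : (0:ℝ) < (L n : ℝ) := by
      have := abs_nonneg (k:ℝ); linarith
    have hpos := (hh n).1
    have hs0 := (hs n).1
    have hD : (0:ℝ) < 2*(L n : ℝ) + (k:ℝ) + s n + 1 := by
      have := neg_abs_le (k:ℝ); linarith
    have e1 : ((h n)⁻¹)^2 = ((L n : ℝ) + s n) * ((L n : ℝ) + s n + 1) := by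
      rw [inv_pow, ← zpow_natCast (h n) 2, ← zpow_neg]
      rw [show -((2:ℕ):ℤ) = (-2 : ℤ) by norm_num, heq n]
      push_cast
      ring
    have e2a : ((L n : ℝ) + s n) * ((L n : ℝ) + s n + 1)
        = (L n : ℝ)^2 * ((1 + s n * (L n : ℝ)⁻¹) * (1 + (s n + 1) * (L n : ℝ)⁻¹)) := by
      field_simp
      ring
    have e2 : (h n)⁻¹
        = (L n : ℝ) * Real.sqrt ((1 + s n * (L n : ℝ)⁻¹) * (1 + (s n + 1) * (L n : ℝ)⁻¹)) := by
      calc (h n)⁻¹ = Real.sqrt (((h n)⁻¹)^2) := (Real.sqrt_sq (by positivity)).symm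
        _ = Real.sqrt ((L n : ℝ)^2 * ((1 + s n * (L n : ℝ)⁻¹) * (1 + (s n + 1) * (L n : ℝ)⁻¹))) := by
            rw [e1, e2a]
        _ = (L n : ℝ) * Real.sqrt ((1 + s n * (L n : ℝ)⁻¹) * (1 + (s n + 1) * (L n : ℝ)⁻¹)) := by
            rw [Real.sqrt_mul (sq_nonneg _), Real.sqrt_sq hx.le]
    show _ = mult 2 ((L n : ℤ) + k) * (h n) ^ (((2:ℕ):ℤ) - 3) / _
    rw [show ((2:ℕ):ℤ) - 3 = (-1 : ℤ) by norm_num, zpow_neg_one, e2]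
    simp only [mult, if_pos rfl]
    push_cast
    set q := Real.sqrt ((1 + s n * ((L n:ℝ))⁻¹) * (1 + (s n + 1) * ((L n:ℝ))⁻¹)) with hq
    have hx' : ((L n:ℝ)) ≠ 0 := ne_of_gt hx
    have hB : (0:ℝ) < 2 + ((k:ℝ) + s n + 1) * ((L n:ℝ))⁻¹ := by
      have hBe : 2 + ((k:ℝ) + s n + 1) * ((L n:ℝ))⁻¹
          = (2*(L n:ℝ) + (k:ℝ) + s n + 1) * ((L n:ℝ))⁻¹ := by field_simp; ring
      rw [hBe]
      exact mul_pos hD (inv_pos.mpr hx)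
    rw [div_eq_div_iff (ne_of_gt (pow_pos hB 2)) (ne_of_gt (pow_pos (by linarith : (0:ℝ) < 2*(L n:ℝ) + (k:ℝ) + s n + 2 - 1) 2))]
    field_simp
    ring
  · -- d = 3
    have key : Tendsto (fun n =>
        (1 + ((k:ℝ)+1) * (L n : ℝ)⁻¹)^2 / (2 + ((k:ℝ) + s n + 2) * (L n : ℝ)⁻¹)^2) atTop
        (nhds ((1 + ((k:ℝ)+1) * 0)^2 / (2 + ((k:ℝ) + σr + 2) * 0)^2)) := by
      apply Tendsto.div
      · exact (tendsto_const_nhds.add (tendsto_const_nhds.mul ht)).pow 2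
      · exact (tendsto_const_nhds.add (((tendsto_const_nhds.add hsto).add
          tendsto_const_nhds).mul ht)).pow 2
      · norm_num
    have keyval : (1 + ((k:ℝ)+1) * 0)^2 / (2 + ((k:ℝ) + σr + 2) * 0)^2
        = (2*(((3:ℕ):ℝ)-1))⁻¹ := by norm_num
    rw [keyval] at key
    refine key.congr' ?_
    filter_upwards [hev] with n hn
    have hx : (0:ℝ) < (L n : ℝ) := by
      have := abs_nonneg (k:ℝ); linarith
    have hs0 := (hs n).1
    have hD : (0:ℝ) < 2*(L n : ℝ) + (k:ℝ) + s n + 2 := by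
      have := neg_abs_le (k:ℝ); linarith
    have hx' : ((L n:ℝ)) ≠ 0 := ne_of_gt hx
    show _ = mult 3 ((L n : ℤ) + k) * (h n) ^ (((3:ℕ):ℤ) - 3) / _
    rw [show ((3:ℕ):ℤ) - 3 = (0 : ℤ) by norm_num, zpow_zero, mul_one]
    simp only [mult, if_neg (by norm_num : ¬ (3:ℕ) = 2)]
    push_cast
    have hB : (0:ℝ) < 2 + ((k:ℝ) + s n + 2) * ((L n:ℝ))⁻¹ := by
      have hBe : 2 + ((k:ℝ) + s n + 2) * ((L n:ℝ))⁻¹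
          = (2*(L n:ℝ) + (k:ℝ) + s n + 2) * ((L n:ℝ))⁻¹ := by field_simp; ring
      rw [hBe]
      exact mul_pos hD (inv_pos.mpr hx)
    rw [div_eq_div_iff (ne_of_gt (pow_pos hB 2)) (ne_of_gt (pow_pos (by linarith : (0:ℝ) < 2*(L n:ℝ) + (k:ℝ) + s n + 3 - 1) 2))]
    field_simp
    ring

lemma term_lim (d : ℕ) (hd : d = 2 ∨ d = 3) (h : ℕ → ℝ) (hh : ∀ n, h n ∈ Set.Ioo (0:ℝ) 1)
    (hto : Tendsto h atTop (nhds 0)) (L : ℕ → ℕ) (s : ℕ → ℝ)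
    (hs : ∀ n, s n ∈ Set.Ico (0:ℝ) 1)
    (heq : ∀ n, (h n) ^ (-2 : ℤ) = ((L n : ℝ) + s n) * ((L n : ℝ) + s n + (d : ℝ) - 1))
    (β : ℕ → ℂ × ℂ) (βl : ℂ × ℂ) (hβ : Tendsto β atTop (nhds βl))
    (ρ : ℂ) (hρ : ∀ n, ρ = (-1 : ℂ) ^ (L n))
    (σ : ℕ) (hsto : Tendsto s atTop (nhds (σ : ℝ))) (c : ℂ)
    (hc : Tendsto (fun n => ((β n).1 + (-1 : ℂ) ^ σ * ρ * (β n).2) / (((σ : ℝ) - s n : ℝ) : ℂ))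
      atTop (nhds c)) (k : ℤ) :
    Tendsto (fun n => ‖(β n).1 + (-1 : ℂ) ^ ((L n : ℤ) + k) * (β n).2‖ ^ 2 *
        mult d ((L n : ℤ) + k) / (lam2 d ((L n : ℤ) + k) - (h n) ^ (-2 : ℤ)) ^ 2 *
        (h n) ^ ((d:ℤ) - 3)) atTop
      (nhds ((if k = (σ:ℤ) then ‖c‖^2
        else ‖βl.1 + (-1:ℂ)^k * ρ * βl.2‖^2 / ((k:ℝ) - (σ:ℝ))^2) * (2*((d:ℝ)-1))⁻¹)) := by
  have hW := Wlim d hd h hh hto L s hs heq (σ:ℝ) hsto k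
  have hA : Tendsto (fun n => ‖(β n).1 + (-1:ℂ)^k * ρ * (β n).2‖^2 / ((k:ℝ) - s n)^2)
      atTop (nhds (if k = (σ:ℤ) then ‖c‖^2
        else ‖βl.1 + (-1:ℂ)^k * ρ * βl.2‖^2 / ((k:ℝ) - (σ:ℝ))^2)) := by
    by_cases hk : k = (σ:ℤ)
    · subst hk
      rw [if_pos rfl]
      simp only [Int.cast_natCast, zpow_natCast]
      have hid : ∀ n, ‖(β n).1 + (-1:ℂ)^σ * ρ * (β n).2‖^2 / ((σ:ℝ) - s n)^2
          = ‖((β n).1 + (-1 : ℂ) ^ σ * ρ * (β n).2) / (((σ:ℝ) - s n : ℝ) : ℂ)‖^2 := by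
        intro n
        rw [norm_div, div_pow, Complex.norm_real, Real.norm_eq_abs, sq_abs]
      simp only [hid]
      exact (hc.norm).pow 2
    · rw [if_neg hk]
      have h1 : Tendsto (fun n => (β n).1) atTop (nhds βl.1) :=
        (Continuous.tendsto continuous_fst βl).comp hβ
      have h2 : Tendsto (fun n => (β n).2) atTop (nhds βl.2) :=
        (Continuous.tendsto continuous_snd βl).comp hβ
      apply Tendsto.div
      · exact ((h1.add (tendsto_const_nhds.mul h2)).norm).pow 2
      · exact (tendsto_const_nhds.sub hsto).pow 2
      · apply pow_ne_zero
        rw [sub_ne_zero]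
        exact_mod_cast hk
  have hid2 : ∀ n, ‖(β n).1 + (-1 : ℂ) ^ ((L n : ℤ) + k) * (β n).2‖ ^ 2 *
      mult d ((L n : ℤ) + k) / (lam2 d ((L n : ℤ) + k) - (h n) ^ (-2 : ℤ)) ^ 2 *
      (h n) ^ ((d:ℤ) - 3)
      = (‖(β n).1 + (-1:ℂ)^k * ρ * (β n).2‖^2 / ((k:ℝ) - s n)^2) *
        (mult d ((L n : ℤ) + k) * (h n) ^ ((d:ℤ) - 3)
          / (2*(L n : ℝ) + (k:ℝ) + s n + (d:ℝ) - 1)^2) := by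
    intro n
    have hexp : (-1 : ℂ) ^ ((L n : ℤ) + k) = (-1:ℂ)^k * ρ := by
      rw [zpow_add₀ (by norm_num : (-1:ℂ) ≠ 0), hρ n, zpow_natCast]
      ring
    rw [hexp]
    have hden : lam2 d ((L n : ℤ) + k) - (h n) ^ (-2 : ℤ)
        = ((k:ℝ) - s n) * (2*(L n : ℝ) + (k:ℝ) + s n + (d:ℝ) - 1) := by
      rw [heq n]
      unfold lam2
      push_cast
      ring
    rw [hden, mul_pow, div_mul_div_comm, div_mul_eq_mul_div, mul_assoc]
  simp only [hid2]
  exact hA.mul hW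


open Finset in
lemma base_summable : Summable (fun j : ℤ => ((j:ℝ)^2)⁻¹) := by
  simpa [one_div] using (Real.summable_one_div_int_pow (p := 2)).mpr one_lt_two

lemma shift_summable (a : ℤ) : Summable (fun k : ℤ => (((k:ℝ) - (a:ℝ))^2)⁻¹) := by
  have : (fun k : ℤ => (((k:ℝ) - (a:ℝ))^2)⁻¹)
      = (fun j : ℤ => ((j:ℝ)^2)⁻¹) ∘ (Equiv.subRight a) := by
    funext k; simp only [Function.comp, Equiv.subRight_apply]; push_cast; ring_nf
  rw [this]
  exact ((Equiv.subRight a).summable_iff).mpr base_summable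

open Finset in
lemma tail_bound (a : ℤ) (m : ℕ) (hm : 1 ≤ m) :
    ∑' k : {x : ℤ // x ∉ Finset.Icc (a - (2*(m:ℤ) - 1)) (a + (2*(m:ℤ) - 1))},
      ((((k : ℤ):ℝ) - (a:ℝ))^2)⁻¹ ≤ 2 / m := by
  classical
  apply Summable.tsum_le_of_sum_le ((shift_summable a).subtype _)
  intro s
  set ψ : {x : ℤ // x ∉ Finset.Icc (a - (2*(m:ℤ) - 1)) (a + (2*(m:ℤ) - 1))} → ℕ :=
    fun k => ((k : ℤ) - a).natAbs with hψ
  set g : ℕ → ℝ := fun j => ((j:ℝ)^2)⁻¹ with hg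
  have hterm : ∀ k ∈ s, ((((k : ℤ):ℝ) - (a:ℝ))^2)⁻¹ = g (ψ k) := by
    intro k _
    have h1 : ((ψ k : ℝ))^2 = (((k : ℤ):ℝ) - (a:ℝ))^2 := by
      show ((((k : ℤ) - a).natAbs : ℝ))^2 = _
      rw [Nat.cast_natAbs]
      push_cast [sq_abs]
      ring
    show _ = (((ψ k : ℝ))^2)⁻¹
    rw [h1]
  have hψbig : ∀ k : {x : ℤ // x ∉ Finset.Icc (a - (2*(m:ℤ) - 1)) (a + (2*(m:ℤ) - 1))},
      2*m ≤ ψ k := by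
    intro k
    have hk := k.2
    simp only [Finset.mem_Icc, not_and_or, not_le] at hk
    show 2*m ≤ ((k : ℤ) - a).natAbs
    omega
  calc ∑ k ∈ s, ((((k : ℤ):ℝ) - (a:ℝ))^2)⁻¹ = ∑ k ∈ s, g (ψ k) :=
        Finset.sum_congr rfl hterm
    _ = ∑ j ∈ s.image ψ, #{k ∈ s | ψ k = j} • g j := Finset.sum_comp g ψ
    _ ≤ ∑ j ∈ s.image ψ, 2 * g j := by
        apply Finset.sum_le_sum
        intro j hj
        rw [nsmul_eq_mul]
        have hcard : #{k ∈ s | ψ k = j} ≤ 2 := by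
          have : #({a + (j:ℤ), a - (j:ℤ)} : Finset ℤ) ≤ 2 := by
            apply le_trans (Finset.card_insert_le _ _); simp
          refine le_trans (Finset.card_le_card_of_injOn (fun k => (k : ℤ)) ?_ ?_) this
          · intro k hk
            simp only [Finset.mem_coe, Finset.mem_filter] at hk
            have h3 : ((k : ℤ) - a).natAbs = j := hk.2
            simp only [Finset.mem_coe, Finset.mem_insert, Finset.mem_singleton]
            omega
          · exact Subtype.coe_injective.injOn
        have : (0:ℝ) ≤ g j := by rw [hg]; positivity
        calc (#{k ∈ s | ψ k = j} : ℝ) * g j ≤ 2 * g j := by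
              apply mul_le_mul_of_nonneg_right _ this
              exact_mod_cast hcard
          _ = 2 * g j := rfl
    _ = 2 * ∑ j ∈ s.image ψ, g j := (Finset.mul_sum _ _ _).symm
    _ ≤ 2 * ∑ j ∈ Finset.Ioo (2*m-1) ((s.image ψ).sup id + 1), g j := by
        apply mul_le_mul_of_nonneg_left _ (by norm_num)
        apply Finset.sum_le_sum_of_subset_of_nonneg
        · intro j hj
          obtain ⟨k, hk, rfl⟩ := Finset.mem_image.mp hj
          have h1 := hψbig k
          have h2 : ψ k ≤ (s.image ψ).sup id := Finset.le_sup (f := id) hj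
          simp only [Finset.mem_Ioo]
          omega
        · intro j _ _; rw [hg]; positivity
    _ ≤ 2 * (2 / ((2*m-1 : ℕ) + 1)) := by
        apply mul_le_mul_of_nonneg_left _ (by norm_num)
        exact sum_Ioo_inv_sq_le _ _
    _ = 2 / m := by
        have : ((2*m-1 : ℕ) : ℝ) = 2*m - 1 := by
          push_cast [Nat.cast_sub (by omega : 1 ≤ 2*m)]; ring
        rw [this]
        have hm' : (0:ℝ) < m := by exact_mod_cast hm
        field_simp
        ring

/-- Scenario 3 norm asymptotics: with `σ_n → σ ∈ {0,1}`,
`β₊ + (−1)^σ ρ β₋ = 0` and `c = lim (β_{n,+} + (−1)^σ ρ β_{n,−})/(σ − σ_n)`,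
the window sum over `|k−σ| ≤ 2Υ−1` equals `C₀² h_n^{3−d}/(2(d−1))` up to the
stated error, with `C₀² = |c|² + Σ_{k≠σ} |β₊ + (−1)^k ρ β₋|²/(k−σ)²`. -/
theorem stmt_8 (d : ℕ) (hd : d = 2 ∨ d = 3)
    (h : ℕ → ℝ) (hh : ∀ n, h n ∈ Set.Ioo (0 : ℝ) 1)
    (hto : Tendsto h atTop (nhds 0))
    (hspec : ∀ n, ∀ l : ℕ, (h n) ^ (-2 : ℤ) ≠ lam2 d (l : ℤ))
    (L : ℕ → ℕ) (s : ℕ → ℝ) (hs : ∀ n, s n ∈ Set.Ico (0 : ℝ) 1)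
    (heq : ∀ n, (h n) ^ (-2 : ℤ) =
      ((L n : ℝ) + s n) * ((L n : ℝ) + s n + (d : ℝ) - 1))
    (β : ℕ → ℂ × ℂ) (βl : ℂ × ℂ) (hβ : Tendsto β atTop (nhds βl))
    (ρ : ℂ) (hρ : ∀ n, ρ = (-1 : ℂ) ^ (L n))
    (σ : ℕ) (hσ : σ = 0 ∨ σ = 1)
    (hsto : Tendsto s atTop (nhds (σ : ℝ)))
    (hcancel : βl.1 + (-1 : ℂ) ^ σ * ρ * βl.2 = 0)
    (c : ℂ)
    (hc : Tendsto
      (fun n => ((β n).1 + (-1 : ℂ) ^ σ * ρ * (β n).2) / (((σ : ℝ) - s n : ℝ) : ℂ))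
      atTop (nhds c)) :
    ∃ C : ℝ, 1 < C ∧ ∀ Υ : ℕ, 1 ≤ Υ → ∃ ν : ℕ, ∀ n ≥ ν,
      |(∑ k ∈ Finset.Icc ((σ : ℤ) - (2 * (Υ : ℤ) - 1)) ((σ : ℤ) + (2 * (Υ : ℤ) - 1)),
          ‖(β n).1 + (-1 : ℂ) ^ ((L n : ℤ) + k) * (β n).2‖ ^ 2 *
            mult d ((L n : ℤ) + k) /
              (lam2 d ((L n : ℤ) + k) - (h n) ^ (-2 : ℤ)) ^ 2)
        - (‖c‖ ^ 2 + ∑' k : {k : ℤ // k ≠ (σ : ℤ)},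
            ‖βl.1 + (-1 : ℂ) ^ (k : ℤ) * ρ * βl.2‖ ^ 2 / (((k : ℤ) : ℝ) - (σ : ℝ)) ^ 2)
            * (h n) ^ ((3 : ℤ) - (d : ℤ)) / (2 * ((d : ℝ) - 1))|
      ≤ C * (h n) ^ ((3 : ℤ) - (d : ℤ)) *
          ((Υ : ℝ) * h n + |s n - (σ : ℝ)| + ‖β n - βl‖
            + ‖c - ((β n).1 + (-1 : ℂ) ^ σ * ρ * (β n).2) / (((σ : ℝ) - s n : ℝ) : ℂ)‖
            + (Υ : ℝ)⁻¹) := by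
  classical
  set M : ℝ := ‖βl.1‖ + ‖ρ * βl.2‖ with hM
  have hM0 : 0 ≤ M := by positivity
  set f : ℤ → ℝ := fun k => ‖βl.1 + (-1:ℂ)^k * ρ * βl.2‖^2 / (((k:ℤ):ℝ) - (σ:ℝ))^2 with hf
  have hfσ : f (σ:ℤ) = 0 := by
    rw [hf]
    simp only [zpow_natCast]
    rw [hcancel]
    simp
  have hfnn : ∀ k, 0 ≤ f k := by intro k; rw [hf]; positivity
  have hfle : ∀ k : ℤ, f k ≤ M^2 * ((((k:ℤ):ℝ) - (σ:ℝ))^2)⁻¹ := by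
    intro k
    simp only [hf]
    rw [div_eq_mul_inv]
    apply mul_le_mul_of_nonneg_right _ (by positivity)
    have hnum : ‖βl.1 + (-1:ℂ)^k * ρ * βl.2‖ ≤ M := by
      refine le_trans (norm_add_le _ _) ?_
      rw [hM]
      gcongr
      rw [mul_assoc, norm_mul, norm_zpow, norm_neg, norm_one, one_zpow, one_mul]
    calc ‖βl.1 + (-1:ℂ)^k * ρ * βl.2‖^2 ≤ M^2 := by
          apply pow_le_pow_left₀ (norm_nonneg _) hnum
      _ = M^2 := rfl
  have hbase : Summable (fun k : ℤ => M^2 * ((((k:ℤ):ℝ) - (σ:ℝ))^2)⁻¹) := by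
    have := (shift_summable (σ:ℤ)).mul_left (M^2)
    simpa using this
  have hsum : Summable f := Summable.of_nonneg_of_le hfnn hfle hbase
  have hsupp : Function.support f ⊆ {k : ℤ | k ≠ (σ:ℤ)} := by
    intro k hk
    simp only [Set.mem_setOf_eq]
    intro hkσ
    exact hk (by rw [hkσ]; exact hfσ)
  have hT : (∑' k : {k : ℤ // k ≠ (σ : ℤ)},
      ‖βl.1 + (-1 : ℂ) ^ (k : ℤ) * ρ * βl.2‖ ^ 2 / (((k : ℤ) : ℝ) - (σ : ℝ)) ^ 2)
      = ∑' k : ℤ, f k := by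
    exact tsum_subtype_eq_of_support_subset hsupp
  -- choose C
  refine ⟨M^2 + 2, by nlinarith, ?_⟩
  intro Υ hΥ
  set W : Finset ℤ := Finset.Icc ((σ : ℤ) - (2 * (Υ : ℤ) - 1)) ((σ : ℤ) + (2 * (Υ : ℤ) - 1))
    with hWdef
  have hσW : (σ:ℤ) ∈ W := by
    rw [hWdef, Finset.mem_Icc]
    omega
  -- the tail bound
  have htail0 : 0 ≤ ∑' (k : {x : ℤ // x ∉ W}), f k :=
    tsum_nonneg (fun k => hfnn _)
  have htail : ∑' (k : {x : ℤ // x ∉ W}), f k ≤ M^2 * (2/Υ) := by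
    have step1 : ∑' (k : {x : ℤ // x ∉ W}), f k
        ≤ ∑' (k : {x : ℤ // x ∉ W}), M^2 * ((((k:ℤ):ℝ) - (σ:ℝ))^2)⁻¹ := by
      apply Summable.tsum_le_tsum (fun k => hfle _) (hsum.subtype _) (hbase.subtype _)
    refine le_trans step1 ?_
    rw [tsum_mul_left]
    apply mul_le_mul_of_nonneg_left _ (by positivity)
    have := tail_bound (σ:ℤ) Υ hΥ
    simpa using this
  have hcompl := Summable.sum_add_tsum_subtype_compl hsum W
  -- main limit
  have hlim : Tendsto (fun n =>
      (∑ k ∈ W, ‖(β n).1 + (-1 : ℂ) ^ ((L n : ℤ) + k) * (β n).2‖ ^ 2 *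
        mult d ((L n : ℤ) + k) / (lam2 d ((L n : ℤ) + k) - (h n) ^ (-2 : ℤ)) ^ 2)
        * (h n) ^ ((d:ℤ) - 3)) atTop
      (nhds ((‖c‖^2 + ∑ k ∈ W, f k) * (2*((d:ℝ)-1))⁻¹)) := by
    have e_ite : ∑ k ∈ W, ((if k = (σ:ℤ) then ‖c‖^2
        else ‖βl.1 + (-1:ℂ)^k * ρ * βl.2‖^2 / (((k:ℤ):ℝ) - (σ:ℝ))^2) * (2*((d:ℝ)-1))⁻¹)
        = (‖c‖^2 + ∑ k ∈ W, f k) * (2*((d:ℝ)-1))⁻¹ := by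
      rw [← Finset.sum_mul]
      congr 1
      rw [← Finset.add_sum_erase W _ hσW, ← Finset.add_sum_erase W f hσW, if_pos rfl, hfσ,
        zero_add]
      congr 1
      apply Finset.sum_congr rfl
      intro k hk
      rw [if_neg (Finset.ne_of_mem_erase hk)]
    rw [← e_ite]
    simp only [Finset.sum_mul]
    apply tendsto_finset_sum
    intro k _
    exact term_lim d hd h hh hto L s hs heq β βl hβ ρ hρ σ hsto c hc k
  obtain ⟨ν, hν⟩ := (Metric.tendsto_atTop.mp hlim) ((Υ:ℝ)⁻¹) (by positivity)
  refine ⟨ν, fun n hn => ?_⟩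
  have hν' := hν n hn
  rw [Real.dist_eq] at hν'
  have hhn := (hh n).1
  rw [hT]
  set P : ℝ := (h n) ^ ((3:ℤ) - (d:ℤ)) with hP
  have hP0 : 0 < P := zpow_pos hhn _
  set G : ℝ := ∑ k ∈ W, ‖(β n).1 + (-1 : ℂ) ^ ((L n : ℤ) + k) * (β n).2‖ ^ 2 *
      mult d ((L n : ℤ) + k) / (lam2 d ((L n : ℤ) + k) - (h n) ^ (-2 : ℤ)) ^ 2 with hG
  set Sf : ℝ := ‖c‖^2 + ∑' k : ℤ, f k with hSf
  set SW : ℝ := ‖c‖^2 + ∑ k ∈ W, f k with hSW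
  have hPmul : P * (h n) ^ ((d:ℤ) - 3) = 1 := by
    rw [hP, ← zpow_add₀ (ne_of_gt hhn)]
    norm_num
  have hid : G - Sf * P / (2*((d:ℝ)-1))
      = P * (G * (h n) ^ ((d:ℤ) - 3) - Sf * (2*((d:ℝ)-1))⁻¹) := by
    linear_combination (-G) * hPmul
  rw [hid, abs_mul, abs_of_pos hP0]
  -- bound |X|
  have hdiffSW : Sf - SW = ∑' (k : {x : ℤ // x ∉ W}), f k := by
    rw [hSf, hSW]
    have := hcompl
    linarith
  have h2d : (2:ℝ) ≤ 2*((d:ℝ)-1) := by rcases hd with rfl | rfl <;> norm_num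
  have hinvd : (2*((d:ℝ)-1))⁻¹ ≤ 2⁻¹ := by
    apply inv_anti₀ (by norm_num) h2d
  have hXa : |SW * (2*((d:ℝ)-1))⁻¹ - Sf * (2*((d:ℝ)-1))⁻¹| ≤ M^2 * (Υ:ℝ)⁻¹ := by
    rw [← sub_mul, abs_mul, abs_sub_comm, abs_of_nonneg (by positivity : (0:ℝ) ≤ (2*((d:ℝ)-1))⁻¹)]
    rw [hdiffSW, abs_of_nonneg htail0]
    calc (∑' (k : {x : ℤ // x ∉ W}), f k) * (2*((d:ℝ)-1))⁻¹
        ≤ (M^2 * (2/Υ)) * 2⁻¹ := by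
          apply mul_le_mul htail hinvd (by positivity) (by positivity)
      _ = M^2 * (Υ:ℝ)⁻¹ := by ring
  have hX : |G * (h n) ^ ((d:ℤ) - 3) - Sf * (2*((d:ℝ)-1))⁻¹| ≤ (1 + M^2) * (Υ:ℝ)⁻¹ := by
    calc |G * (h n) ^ ((d:ℤ) - 3) - Sf * (2*((d:ℝ)-1))⁻¹|
        ≤ |G * (h n) ^ ((d:ℤ) - 3) - SW * (2*((d:ℝ)-1))⁻¹|
          + |SW * (2*((d:ℝ)-1))⁻¹ - Sf * (2*((d:ℝ)-1))⁻¹| := abs_sub_le _ _ _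
      _ ≤ (Υ:ℝ)⁻¹ + M^2 * (Υ:ℝ)⁻¹ := by
          apply add_le_add (le_of_lt hν') hXa
      _ = (1 + M^2) * (Υ:ℝ)⁻¹ := by ring
  -- final chain
  have hbr : (Υ:ℝ)⁻¹ ≤ (Υ : ℝ) * h n + |s n - (σ : ℝ)| + ‖β n - βl‖
      + ‖c - ((β n).1 + (-1 : ℂ) ^ σ * ρ * (β n).2) / (((σ : ℝ) - s n : ℝ) : ℂ)‖
      + (Υ : ℝ)⁻¹ := by
    have h1 : (0:ℝ) ≤ (Υ : ℝ) * h n := by positivity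
    have h2 : (0:ℝ) ≤ |s n - (σ : ℝ)| := abs_nonneg _
    have h3 : (0:ℝ) ≤ ‖β n - βl‖ := norm_nonneg _
    have h4 : (0:ℝ) ≤ ‖c - ((β n).1 + (-1 : ℂ) ^ σ * ρ * (β n).2)
        / (((σ : ℝ) - s n : ℝ) : ℂ)‖ := norm_nonneg _
    linarith
  calc P * |G * (h n) ^ ((d:ℤ) - 3) - Sf * (2*((d:ℝ)-1))⁻¹|
      ≤ P * ((1 + M^2) * (Υ:ℝ)⁻¹) := by
        apply mul_le_mul_of_nonneg_left hX (le_of_lt hP0)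
    _ = (1 + M^2) * P * (Υ:ℝ)⁻¹ := by ring
    _ ≤ (M^2 + 2) * P * ((Υ : ℝ) * h n + |s n - (σ : ℝ)| + ‖β n - βl‖
          + ‖c - ((β n).1 + (-1 : ℂ) ^ σ * ρ * (β n).2) / (((σ : ℝ) - s n : ℝ) : ℂ)‖
          + (Υ : ℝ)⁻¹) := by
        apply mul_le_mul _ hbr (by positivity) (by positivity)
        nlinarith [hP0, hM0]
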